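/- Let r ≥ 2 be a natural number, q = 2r − 1, and let Pₙ be the polynomials defined by P₀(x) = 1, P₁(x) = x, P_{n+1}(x) = ((q+1)/q)·x·Pₙ(x) − (1/q)·P_{n−1}(x). Then for every n ∈ ℕ and every s ∈ [−1,1), (1 − Pₙ(s))/(1 − s) ≤ (r/(r−1))·n, and also P'ₙ(1) ≤ (r/(r−1))·n. (Equivalently, ψ_s(x) ≤ (r/(r−1))·|x| for every x ∈ F_r and every s ∈ [−1,1].) -/

import Mathlib

noncomputable section

/-- The spherical polynomials `Pₙ` for the parameter `q`:
`P₀ = 1`, `P₁ = X`, `P_{n+2}(x) = ((q+1)/q)·x·P_{n+1}(x) − (1/q)·Pₙ(x)`. -/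
def P (q : ℝ) : ℕ → ℝ → ℝ
  | 0 => fun _ => 1
  | 1 => fun s => s
  | (n + 2) => fun s => ((q + 1) / q) * s * P q (n + 1) s - (1 / q) * P q n s

namespace PsiAux

lemma P_zero (q s : ℝ) : P q 0 s = 1 := rfl
lemma P_one' (q s : ℝ) : P q 1 s = s := rfl
lemma P_succ_succ (q : ℝ) (n : ℕ) (s : ℝ) :
    P q (n+2) s = ((q + 1) / q) * s * P q (n + 1) s - (1 / q) * P q n s := rfl

lemma P_invariant (q : ℝ) (hq : q ≠ 0) (n : ℕ) (s : ℝ) :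
    (P q (n+1) s)^2 - (q+1)/q * s * (P q (n+1) s) * (P q n s) + 1/q * (P q n s)^2
      = (1/q)^(n+1) * (1 - s^2) := by
  induction n with
  | zero => rw [P_zero, P_one', zero_add, pow_one]; field_simp; ring
  | succ n ih =>
      rw [P_succ_succ]
      linear_combination (1/q) * ih

lemma abs_le_one_step (q s x y e : ℝ) (hq : 3 ≤ q) (hs : |s| ≤ 1) (hy : |y| ≤ 1)
    (hinv : x^2 - (q+1)/q * s * x * y + 1/q * y^2 = e)
    (he0 : 0 ≤ e) (heq : q * e ≤ 1 - s^2) : |x| ≤ 1 := by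
  have hq0 : (0:ℝ) < q := by linarith
  obtain ⟨hs1, hs2⟩ := abs_le.mp hs
  obtain ⟨hy1, hy2⟩ := abs_le.mp hy
  have hs2' : s^2 ≤ 1 := by nlinarith
  have hy2' : y^2 ≤ 1 := by nlinarith
  have hA1 : 0 ≤ q - (q+1)*s*y + y^2 + s^2 - 1 := by
    nlinarith [sq_nonneg (s - y)]
  have hA2 : 0 ≤ q + (q+1)*s*y + y^2 + s^2 - 1 := by
    nlinarith [sq_nonneg (s + y)]
  have hkey1 : 0 ≤ 1 - (q+1)/q*s*y + 1/q*y^2 - e := by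
    have heq1 : 1 - (q+1)/q*s*y + 1/q*y^2 - e
        = (1/q)*((q - (q+1)*s*y + y^2) - q*e) := by
      field_simp
    rw [heq1]
    apply mul_nonneg (by positivity)
    linarith
  have hkey2 : 0 ≤ 1 + (q+1)/q*s*y + 1/q*y^2 - e := by
    have heq2 : 1 + (q+1)/q*s*y + 1/q*y^2 - e
        = (1/q)*((q + (q+1)*s*y + y^2) - q*e) := by
      field_simp
    rw [heq2]
    apply mul_nonneg (by positivity)
    linarith
  have hsy1 : -1 ≤ s * y := by nlinarith
  have hsy2 : s * y ≤ 1 := by nlinarith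
  have haq : (q+1)/q < 2 := by rw [div_lt_iff₀ hq0]; linarith
  have haq0 : (0:ℝ) < (q+1)/q := by positivity
  have hasy1 : (q+1)/q * s * y ≤ (q+1)/q := by
    rw [mul_assoc]
    exact mul_le_of_le_one_right (le_of_lt haq0) hsy2
  have hasy2 : -((q+1)/q) ≤ (q+1)/q * s * y := by
    rw [mul_assoc]
    have := mul_le_mul_of_nonneg_left hsy1 (le_of_lt haq0)
    linarith
  rw [abs_le]
  constructor
  · by_contra h
    push_neg at h
    have hprod : (1 + x) * (1 + ((q+1)/q*s*y - x)) = 1 + (q+1)/q*s*y + 1/q*y^2 - e := by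
      linear_combination -hinv
    have h5 : 0 ≤ (1 + x) * (1 + ((q+1)/q*s*y - x)) := by rw [hprod]; exact hkey2
    have h6 : 1 + ((q+1)/q*s*y - x) ≤ 0 := by
      by_contra h7
      push_neg at h7
      have := mul_neg_of_neg_of_pos (show 1 + x < 0 by linarith) h7
      linarith
    linarith [hasy2, haq, h6, h]
  · by_contra h
    push_neg at h
    have hprod : (1 - x) * (1 - ((q+1)/q*s*y - x)) = 1 - (q+1)/q*s*y + 1/q*y^2 - e := by
      linear_combination -hinv
    have h5 : 0 ≤ (1 - x) * (1 - ((q+1)/q*s*y - x)) := by rw [hprod]; exact hkey1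
    have h6 : 1 - ((q+1)/q*s*y - x) ≤ 0 := by
      by_contra h7
      push_neg at h7
      have := mul_neg_of_neg_of_pos (show 1 - x < 0 by linarith) h7
      linarith
    linarith [hasy1, haq, h6, h]

lemma P_bound (q : ℝ) (hq : 3 ≤ q) (n : ℕ) (s : ℝ) (hs : |s| ≤ 1) : |P q n s| ≤ 1 := by
  have hq0 : (0:ℝ) < q := by linarith
  have hs2' : s^2 ≤ 1 := by
    obtain ⟨hs1, hs2⟩ := abs_le.mp hs
    nlinarith
  induction n with
  | zero => rw [P_zero]; norm_num
  | succ n ih =>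
      have hinv := P_invariant q (ne_of_gt hq0) n s
      refine abs_le_one_step q s (P q (n+1) s) (P q n s) ((1/q)^(n+1) * (1 - s^2))
        hq hs ih hinv ?_ ?_
      · apply mul_nonneg (by positivity) (by linarith)
      · have h1 : (1/q)^(n+1) ≤ (1/q)^1 := by
          apply pow_le_pow_of_le_one (by positivity) (by rw [div_le_one hq0]; linarith)
          omega
        have h2 : q * ((1/q)^(n+1) * (1 - s^2)) ≤ q * ((1/q) * (1 - s^2)) := by
          apply mul_le_mul_of_nonneg_left _ (le_of_lt hq0)
          apply mul_le_mul_of_nonneg_right _ (by linarith)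
          rw [pow_one] at h1; exact h1
        have h3 : q * ((1/q) * (1 - s^2)) = 1 - s^2 := by field_simp
        linarith

lemma P_at_one (q : ℝ) (hq : q ≠ 0) : ∀ n, P q n 1 = 1
  | 0 => rfl
  | 1 => rfl
  | (n+2) => by
      rw [P_succ_succ, P_at_one q hq (n+1), P_at_one q hq n]
      field_simp
      ring

lemma P_step (q : ℝ) (hq : 3 ≤ q) (n : ℕ) (s : ℝ) (hs : |s| ≤ 1) :
    P q n s - P q (n+1) s ≤ (q+1)/(q-1) * (1 - s) := by
  have hq0 : (0:ℝ) < q := by linarith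
  obtain ⟨hs1, hs2⟩ := abs_le.mp hs
  have hK1 : (1:ℝ) ≤ (q+1)/(q-1) := by
    rw [le_div_iff₀ (by linarith)]; linarith
  induction n with
  | zero =>
      rw [P_zero, P_one']
      nlinarith
  | succ n ih =>
      have hcancel : q * q⁻¹ = 1 := mul_inv_cancel₀ (ne_of_gt hq0)
      have hid : P q (n+1) s - P q (n+2) s
          = (1/q) * (P q n s - P q (n+1) s) + (q+1)/q * (1-s) * P q (n+1) s := by
        rw [P_succ_succ]
        field_simp
        ring
      have hb := P_bound q hq (n+1) s hs
      obtain ⟨hb1, hb2⟩ := abs_le.mp hb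
      have hterm : (q+1)/q * (1-s) * P q (n+1) s ≤ (q+1)/q * (1-s) := by
        nlinarith [mul_nonneg (le_of_lt (show (0:ℝ) < (q+1)/q by positivity)) (show (0:ℝ) ≤ 1 - s by linarith)]
      have hqne : q ≠ 0 := ne_of_gt hq0
      have hq1ne : q - 1 ≠ 0 := by intro h; rw [sub_eq_zero] at h; linarith [h]
      have hKid : (1/q) * ((q+1)/(q-1)) + (q+1)/q = (q+1)/(q-1) := by
        field_simp
        ring
      have h1 : (1/q) * (P q n s - P q (n+1) s) ≤ (1/q) * ((q+1)/(q-1) * (1-s)) := by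
        apply mul_le_mul_of_nonneg_left ih (by positivity)
      calc P q (n+1) s - P q (n+2) s
          = (1/q) * (P q n s - P q (n+1) s) + (q+1)/q * (1-s) * P q (n+1) s := hid
        _ ≤ (1/q) * ((q+1)/(q-1) * (1-s)) + (q+1)/q * (1-s) := by linarith
        _ = ((1/q) * ((q+1)/(q-1)) + (q+1)/q) * (1-s) := by ring
        _ = (q+1)/(q-1) * (1-s) := by rw [hKid]

lemma P_sum (q : ℝ) (hq : 3 ≤ q) (n : ℕ) (s : ℝ) (hs : |s| ≤ 1) :
    1 - P q n s ≤ (q+1)/(q-1) * n * (1 - s) := by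
  induction n with
  | zero => rw [P_zero]; norm_num
  | succ n ih =>
      have h := P_step q hq n s hs
      push_cast
      nlinarith

lemma P_diff (q : ℝ) : ∀ n, Differentiable ℝ (P q n)
  | 0 => by
      have : P q 0 = fun _ => (1:ℝ) := rfl
      rw [this]; exact differentiable_const 1
  | 1 => by
      have : P q 1 = fun s => s := rfl
      rw [this]; exact differentiable_id
  | (n+2) => by
      have h1 := P_diff q (n+1)
      have h2 := P_diff q n
      have : P q (n+2) = fun s => ((q + 1) / q) * s * P q (n + 1) s - (1 / q) * P q n s := rfl
      rw [this]
      exact (((differentiable_const _).mul differentiable_id).mul h1).sub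
        ((differentiable_const _).mul h2)

end PsiAux

open PsiAux Filter Set Topology in
theorem psi_linear_bound (r : ℕ) (hr : 2 ≤ r) (n : ℕ) :
    (∀ s ∈ Set.Ico (-1 : ℝ) 1,
      (1 - P (2 * (r : ℝ) - 1) n s) / (1 - s) ≤ (r : ℝ) / ((r : ℝ) - 1) * (n : ℝ)) ∧
    deriv (P (2 * (r : ℝ) - 1) n) 1 ≤ (r : ℝ) / ((r : ℝ) - 1) * (n : ℝ) := by
  set q : ℝ := 2 * (r : ℝ) - 1 with hqdef
  have hr2 : (2:ℝ) ≤ (r:ℝ) := by exact_mod_cast hr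
  have hq : 3 ≤ q := by rw [hqdef]; linarith
  have hq0 : (0:ℝ) < q := by linarith
  have hK : (q+1)/(q-1) = (r:ℝ)/((r:ℝ)-1) := by
    rw [hqdef]
    rw [div_eq_div_iff (by linarith) (by linarith)]
    ring
  have part1 : ∀ s ∈ Set.Ico (-1 : ℝ) 1,
      (1 - P q n s) / (1 - s) ≤ (r : ℝ) / ((r : ℝ) - 1) * (n : ℝ) := by
    intro s hs
    obtain ⟨hs1, hs2⟩ := hs
    have habs : |s| ≤ 1 := abs_le.mpr ⟨hs1, le_of_lt hs2⟩
    have hsum := P_sum q hq n s habs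
    rw [div_le_iff₀ (by linarith : (0:ℝ) < 1 - s)]
    rw [← hK]
    nlinarith
  refine ⟨part1, ?_⟩
  -- derivative bound via slope limit
  have hd : HasDerivAt (P q n) (deriv (P q n) 1) 1 :=
    ((P_diff q n) 1).hasDerivAt
  have ht : Tendsto (slope (P q n) 1) (𝓝[≠] (1:ℝ)) (𝓝 (deriv (P q n) 1)) :=
    hasDerivAt_iff_tendsto_slope.mp hd
  have hsub : Set.Ioo (-1:ℝ) 1 ⊆ {(1:ℝ)}ᶜ := fun x hx => ne_of_lt hx.2
  have ht' : Tendsto (slope (P q n) 1) (𝓝[Set.Ioo (-1:ℝ) 1] (1:ℝ)) (𝓝 (deriv (P q n) 1)) :=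
    ht.mono_left (nhdsWithin_mono 1 hsub)
  haveI hne : (𝓝[Set.Ioo (-1:ℝ) 1] (1:ℝ)).NeBot := by
    rw [← mem_closure_iff_nhdsWithin_neBot, closure_Ioo (by norm_num : (-1:ℝ) ≠ 1)]
    constructor <;> norm_num
  refine le_of_tendsto ht' ?_
  filter_upwards [eventually_mem_nhdsWithin] with s hs
  have hs' : s ∈ Set.Ico (-1:ℝ) 1 := ⟨le_of_lt hs.1, hs.2⟩
  have hbd := part1 s hs'
  have h1 : P q n 1 = 1 := P_at_one q (ne_of_gt hq0) n
  have heq : slope (P q n) 1 s = (1 - P q n s)/(1 - s) := by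
    rw [slope_def_field, h1]
    rw [show P q n s - 1 = -(1 - P q n s) by ring, show s - 1 = -(1 - s) by ring,
      neg_div_neg_eq]
  rw [heq]
  exact hbd
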